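/- If a continuous map f : I → I of a closed bounded interval into itself has a periodic point of least period 2^l for some l ≥ 0, then for every i with 0 ≤ i < l, f has a periodic point of least period 2^i. -/

import Mathlib

open Set Function

/-- Fixed point via IVT on a subinterval. -/
private lemma fix_of_ivt (f : ℝ → ℝ) (u v : ℝ) (huv : u ≤ v)
    (hc : ContinuousOn f (Icc u v)) (h1 : u ≤ f u) (h2 : f v ≤ v) :
    ∃ w ∈ Icc u v, f w = w := by
  have hcont : ContinuousOn (fun t => f t - t) (Icc u v) := hc.sub continuousOn_id
  have h0 : (0 : ℝ) ∈ Icc ((fun t => f t - t) v) ((fun t => f t - t) u) := by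
    constructor <;> simp <;> linarith
  obtain ⟨w, hw, hw0⟩ := intermediate_value_Icc' huv hcont h0
  exact ⟨w, hw, by simpa [sub_eq_zero] using hw0⟩

/-- Key lemma: if f y > y and f (f y) ≤ y then f has a genuine period-2 point. -/
private lemma lemC (a b : ℝ) (f : ℝ → ℝ)
    (hc : ContinuousOn f (Icc a b)) (hm : MapsTo f (Icc a b) (Icc a b))
    (y : ℝ) (hy : y ∈ Icc a b) (h1 : y < f y) (h2 : f (f y) ≤ y) :
    ∃ w ∈ Icc a b, f (f w) = w ∧ f w ≠ w := by
  rcases eq_or_lt_of_le h2 with heq | h2'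
  · exact ⟨y, hy, heq, fun h => absurd h (ne_of_gt h1)⟩
  by_contra hno
  push_neg at hno
  -- hno : ∀ w ∈ Icc a b, f (f w) = w → f w = w
  have hffc : ContinuousOn (fun t => f (f t)) (Icc a b) := hc.comp hc hm
  have hffm : MapsTo (fun t => f (f t)) (Icc a b) (Icc a b) := hm.comp hm
  -- z : least fixed point in [y, b]
  have hyb : Icc y b ⊆ Icc a b := Icc_subset_Icc hy.1 le_rfl
  obtain ⟨z0, hz0, hz0fix⟩ := fix_of_ivt f y b hy.2 (hc.mono hyb) (le_of_lt h1)
    (hm ⟨le_trans hy.1 hy.2, le_rfl⟩).2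
  obtain ⟨S, hS_def⟩ : ∃ S : Set ℝ, S = Icc y b ∩ (fun t => f t - t) ⁻¹' {0} := ⟨_, rfl⟩
  have hS_closed : IsClosed S := by
    rw [hS_def]
    exact ContinuousOn.preimage_isClosed_of_isClosed ((hc.mono hyb).sub continuousOn_id)
      isClosed_Icc isClosed_singleton
  have hS_ne : S.Nonempty := ⟨z0, by rw [hS_def]; exact ⟨hz0, by simp [sub_eq_zero, hz0fix]⟩⟩
  have hS_bdd : BddBelow S := (bddBelow_Icc : BddBelow (Icc y b)).mono (by rw [hS_def]; exact inter_subset_left)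
  obtain ⟨z, hz_def⟩ : ∃ z : ℝ, z = sInf S := ⟨_, rfl⟩
  have hzS : z ∈ S := by rw [hz_def]; exact hS_closed.csInf_mem hS_ne hS_bdd
  rw [hS_def] at hzS
  have hz_fix : f z = z := by have := hzS.2; simpa [sub_eq_zero] using this
  have hz_mem : z ∈ Icc y b := hzS.1
  have hyz : y < z := lt_of_le_of_ne hz_mem.1 (by rintro rfl; exact absurd hz_fix (ne_of_gt h1))
  have hz_min : ∀ t, t ∈ Icc y b → f t = t → z ≤ t := by
    intro t ht hft
    rw [hz_def]
    exact csInf_le hS_bdd (by rw [hS_def]; exact ⟨ht, by simp [sub_eq_zero, hft]⟩)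
  -- α : greatest point ≤ y with f (f α) ≥ α
  obtain ⟨T, hT_def⟩ : ∃ T : Set ℝ, T = Icc a y ∩ (fun t => f (f t) - t) ⁻¹' (Ici 0) := ⟨_, rfl⟩
  have hay : Icc a y ⊆ Icc a b := Icc_subset_Icc le_rfl hy.2
  have hT_closed : IsClosed T := by
    rw [hT_def]
    exact ContinuousOn.preimage_isClosed_of_isClosed ((hffc.mono hay).sub continuousOn_id)
      isClosed_Icc isClosed_Ici
  have hT_ne : T.Nonempty := by
    rw [hT_def]
    refine ⟨a, ⟨le_rfl, hy.1⟩, ?_⟩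
    have := (hffm ⟨le_rfl, le_trans hy.1 hy.2⟩).1
    simp only [mem_preimage, mem_Ici, sub_nonneg]
    exact this
  have hT_bdd : BddAbove T := (bddAbove_Icc (a := a) (b := y)).mono (by rw [hT_def]; exact inter_subset_left)
  obtain ⟨α, hα_def⟩ : ∃ α : ℝ, α = sSup T := ⟨_, rfl⟩
  have hαT : α ∈ Icc a y ∩ (fun t => f (f t) - t) ⁻¹' (Ici 0) := by
    rw [← hT_def, hα_def]; exact hT_closed.csSup_mem hT_ne hT_bdd
  have hα_mem : α ∈ Icc a y := hαT.1
  have hα_memI : α ∈ Icc a b := hay hα_mem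
  have hα_ge : α ≤ f (f α) := by have := hαT.2; simp only [mem_preimage, mem_Ici, sub_nonneg] at this; exact this
  have hα_lt : α < y := lt_of_le_of_ne hα_mem.2 (by rintro rfl; linarith)
  have hT_above : ∀ t, t ∈ Icc a y ∩ (fun t => f (f t) - t) ⁻¹' (Ici 0) → t ≤ α := by
    intro t ht; rw [hα_def]; exact le_csSup hT_bdd (by rw [hT_def]; exact ht)
  -- step2a : on (α, y], f∘f < id
  have step2a : ∀ t, α < t → t ≤ y → f (f t) < t := by
    intro t ht1 ht2
    by_contra hcon
    push_neg at hcon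
    exact absurd (hT_above t ⟨⟨le_trans hα_mem.1 (le_of_lt ht1), ht2⟩, by
      simp only [mem_preimage, mem_Ici, sub_nonneg]; exact hcon⟩) (not_le.2 ht1)
  -- f (f α) = α
  have hα_fix2 : f (f α) = α := by
    rcases eq_or_lt_of_le hα_ge with h | h
    · exact h.symm
    · exfalso
      have hcont2 : ContinuousOn (fun t => f (f t) - t) (Icc α y) :=
        (hffc.mono (Icc_subset_Icc hα_mem.1 hy.2)).sub continuousOn_id
      have h0 : (0:ℝ) ∈ Icc ((fun t => f (f t) - t) y) ((fun t => f (f t) - t) α) := by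
        constructor <;> simp <;> linarith
      obtain ⟨s, hs, hs0⟩ := intermediate_value_Icc' (le_of_lt hα_lt) hcont2 h0
      simp only [sub_eq_zero] at hs0
      rcases eq_or_lt_of_le hs.1 with h' | h'
      · rw [← h'] at hs0; linarith
      · exact absurd hs0 (ne_of_lt (step2a s h' hs.2))
  have hα_fix : f α = α := hno α hα_memI hα_fix2
  -- no fixed points of f in (α, z)
  have claim_nofix : ∀ t, α < t → t < z → f t ≠ t := by
    intro t ht1 ht2 hft
    rcases le_or_gt t y with h | h
    · have := step2a t ht1 h
      rw [hft, hft] at this; linarith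
    · exact absurd (hz_min t ⟨le_of_lt h, by
        have : t ∈ Icc a b := ⟨le_trans hα_memI.1 (le_of_lt ht1), le_trans (le_of_lt ht2) (hyb hz_mem).2⟩
        exact this.2⟩ hft) (not_le.2 ht2)
  have hmemI : ∀ t, α < t → t < z → t ∈ Icc a b := by
    intro t ht1 ht2
    exact ⟨le_trans hα_memI.1 (le_of_lt ht1), le_trans (le_of_lt ht2) (hyb hz_mem).2⟩
  -- f > id on (α, z)
  have claim_fgt : ∀ t, α < t → t < z → t < f t := by
    intro t ht1 ht2
    rcases lt_trichotomy t (f t) with h | h | h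
    · exact h
    · exact absurd h.symm (claim_nofix t ht1 ht2)
    · exfalso
      rcases le_or_gt t y with hty | hty
      · -- root of f - id in [t, y]
        have hsub : Icc t y ⊆ Icc a b := Icc_subset_Icc (hmemI t ht1 ht2).1 hy.2
        have hcont2 : ContinuousOn (fun s => f s - s) (Icc t y) := (hc.mono hsub).sub continuousOn_id
        have h0 : (0:ℝ) ∈ Icc ((fun s => f s - s) t) ((fun s => f s - s) y) := by
          constructor <;> simp <;> linarith
        obtain ⟨s, hs, hs0⟩ := intermediate_value_Icc hty hcont2 h0
        simp only [sub_eq_zero] at hs0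
        exact claim_nofix s (lt_of_lt_of_le ht1 hs.1) (lt_of_le_of_lt hs.2 hyz) hs0
      · -- root of f - id in [y, t]
        have hsub : Icc y t ⊆ Icc a b := Icc_subset_Icc hy.1 (hmemI t ht1 ht2).2
        have hcont2 : ContinuousOn (fun s => f s - s) (Icc y t) := (hc.mono hsub).sub continuousOn_id
        have h0 : (0:ℝ) ∈ Icc ((fun s => f s - s) t) ((fun s => f s - s) y) := by
          constructor <;> simp <;> linarith
        obtain ⟨s, hs, hs0⟩ := intermediate_value_Icc' (le_of_lt hty) hcont2 h0
        simp only [sub_eq_zero] at hs0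
        exact claim_nofix s (lt_of_lt_of_le hα_lt hs.1) (lt_of_le_of_lt hs.2 ht2) hs0
  -- f ∘ f < id on (α, z)
  have claim_ffl : ∀ t, α < t → t < z → f (f t) < t := by
    intro t ht1 ht2
    rcases le_or_gt t y with h | h
    · exact step2a t ht1 h
    · rcases lt_trichotomy (f (f t)) t with h' | h' | h'
      · exact h'
      · exact absurd (hno t (hmemI t ht1 ht2) h') (claim_nofix t ht1 ht2)
      · exfalso
        have hsub : Icc y t ⊆ Icc a b := Icc_subset_Icc hy.1 (hmemI t ht1 ht2).2
        have hcont2 : ContinuousOn (fun s => f (f s) - s) (Icc y t) := (hffc.mono hsub).sub continuousOn_id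
        have h0 : (0:ℝ) ∈ Icc ((fun s => f (f s) - s) y) ((fun s => f (f s) - s) t) := by
          constructor <;> simp <;> linarith
        obtain ⟨s, hs, hs0⟩ := intermediate_value_Icc (le_of_lt h) hcont2 h0
        simp only [sub_eq_zero] at hs0
        have hsmem : s ∈ Icc a b := hsub hs
        have hs_in : α < s ∧ s < z := ⟨lt_of_lt_of_le hα_lt hs.1, lt_of_le_of_lt hs.2 ht2⟩
        exact claim_nofix s hs_in.1 hs_in.2 (hno s hsmem hs0)
  -- f escapes above z on (α, z)
  have claim_esc : ∀ t, α < t → t < z → z < f t := by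
    intro t ht1 ht2
    rcases lt_trichotomy (f t) z with h | h | h
    · exfalso
      have hft_gt : t < f t := claim_fgt t ht1 ht2
      have := claim_fgt (f t) (lt_trans ht1 hft_gt) h
      have := claim_ffl t ht1 ht2
      linarith
    · exfalso
      have := claim_ffl t ht1 ht2
      rw [h, hz_fix] at this; linarith
    · exact h
  -- final contradiction: IVT for value z on [α, t₀]
  have ht0 : α < (α + y) / 2 ∧ (α + y) / 2 < y := by constructor <;> linarith
  set t₀ := (α + y) / 2 with ht0_def
  have ht0z : t₀ < z := lt_trans ht0.2 hyz
  have hsub : Icc α t₀ ⊆ Icc a b := Icc_subset_Icc hα_memI.1 (hmemI t₀ ht0.1 ht0z).2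
  have h0 : z ∈ Icc (f α) (f t₀) := by
    constructor
    · rw [hα_fix]; linarith [hyz, hα_lt]
    · exact le_of_lt (claim_esc t₀ ht0.1 ht0z)
  obtain ⟨s, hs, hs0⟩ := intermediate_value_Icc (le_of_lt ht0.1) (hc.mono hsub) h0
  have hsα : α < s := by
    rcases eq_or_lt_of_le hs.1 with h | h
    · exfalso; rw [← h, hα_fix] at hs0; linarith [hα_lt, hyz]
    · exact h
  have : z < f s := claim_esc s hsα (lt_of_le_of_lt hs.2 ht0z)
  rw [hs0] at this; exact lt_irrefl z this

/-- Seed lemma: a non-fixed periodic point yields y with f y > y and f (f y) ≤ y. -/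
private lemma lemD (a b : ℝ) (f : ℝ → ℝ)
    (hc : ContinuousOn f (Icc a b)) (hm : MapsTo f (Icc a b) (Icc a b))
    (n : ℕ) (hn : 0 < n) (x : ℝ) (hx : x ∈ Icc a b)
    (hxn : f^[n] x = x) (hfx : f x ≠ x) :
    ∃ y ∈ Icc a b, y < f y ∧ f (f y) ≤ y := by
  classical
  set O : Finset ℝ := (Finset.range n).image (fun k => f^[k] x) with hO_def
  have hO_ne : O.Nonempty := ⟨x, by
    simp only [hO_def, Finset.mem_image]
    exact ⟨0, Finset.mem_range.2 hn, rfl⟩⟩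
  have hO_mem : ∀ t ∈ O, ∃ k, k < n ∧ f^[k] x = t := by
    intro t ht
    simp only [hO_def, Finset.mem_image, Finset.mem_range] at ht
    obtain ⟨k, hk, hkt⟩ := ht; exact ⟨k, hk, hkt⟩
  have hO_sub : ∀ t ∈ O, t ∈ Icc a b := by
    intro t ht
    obtain ⟨k, _, rfl⟩ := hO_mem t ht
    exact hm.iterate k hx
  have hO_f : ∀ t ∈ O, f t ∈ O := by
    intro t ht
    obtain ⟨k, hk, rfl⟩ := hO_mem t ht
    rcases Nat.lt_or_ge (k+1) n with h | h
    · simp only [hO_def, Finset.mem_image, Finset.mem_range]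
      exact ⟨k+1, h, by rw [Function.iterate_succ_apply']⟩
    · have hkn : k + 1 = n := le_antisymm (Nat.succ_le_of_lt hk) h
      simp only [hO_def, Finset.mem_image, Finset.mem_range]
      refine ⟨0, hn, ?_⟩
      have : f^[k+1] x = x := by rw [hkn]; exact hxn
      rw [Function.iterate_succ_apply'] at this
      simp [this]
  have hO_nf : ∀ t ∈ O, f t ≠ t := by
    intro t ht hft
    obtain ⟨k, hk, rfl⟩ := hO_mem t ht
    -- f^[k] x is fixed, so x = f^[n] x = f^[k] x, so f x = x
    have hxeq : x = f^[k] x := by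
      have h1 : f^[n] x = f^[n - k] (f^[k] x) := by
        rw [← Function.iterate_add_apply, Nat.sub_add_cancel (le_of_lt hk)]
      have h2 : f^[n - k] (f^[k] x) = f^[k] x := Function.iterate_fixed hft _
      conv_lhs => rw [← hxn]
      rw [h1, h2]
    apply hfx
    rw [← hxeq] at hft
    exact hft
  -- p := max of points in O that move up
  set P : Finset ℝ := O.filter (fun t => t < f t) with hP_def
  have hP_ne : P.Nonempty := by
    set m := O.min' hO_ne with hm_def
    have hmO : m ∈ O := O.min'_mem hO_ne
    have : m < f m := lt_of_le_of_ne (O.min'_le _ (hO_f m hmO)) (Ne.symm (hO_nf m hmO))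
    exact ⟨m, Finset.mem_filter.2 ⟨hmO, this⟩⟩
  set p := P.max' hP_ne with hp_def
  have hpP := P.max'_mem hP_ne
  have hpO : p ∈ O := (Finset.mem_filter.1 hpP).1
  have hp_up : p < f p := (Finset.mem_filter.1 hpP).2
  set Q : Finset ℝ := O.filter (fun t => p < t) with hQ_def
  have hQ_ne : Q.Nonempty := ⟨f p, Finset.mem_filter.2 ⟨hO_f p hpO, hp_up⟩⟩
  set q := Q.min' hQ_ne with hq_def
  have hqQ := Q.min'_mem hQ_ne
  have hqO : q ∈ O := (Finset.mem_filter.1 hqQ).1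
  have hpq : p < q := (Finset.mem_filter.1 hqQ).2
  have hfq_lt : f q < q := by
    rcases lt_trichotomy (f q) q with h | h | h
    · exact h
    · exact absurd h (hO_nf q hqO)
    · exfalso
      have : q ∈ P := Finset.mem_filter.2 ⟨hqO, h⟩
      exact absurd (P.le_max' q this) (not_le.2 hpq)
  have hfq_le : f q ≤ p := by
    by_contra h
    push_neg at h
    have : f q ∈ Q := Finset.mem_filter.2 ⟨hO_f q hqO, h⟩
    exact absurd (Q.min'_le _ this) (not_le.2 hfq_lt)
  have hfp_ge : q ≤ f p := Q.min'_le _ (Finset.mem_filter.2 ⟨hO_f p hpO, hp_up⟩)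
  -- IVT: find y ∈ [p,q] with f y = q
  have hsub : Icc p q ⊆ Icc a b := Icc_subset_Icc (hO_sub p hpO).1 (hO_sub q hqO).2
  have h0 : q ∈ Icc (f q) (f p) := ⟨le_of_lt hfq_lt, hfp_ge⟩
  obtain ⟨y, hy, hfy⟩ := intermediate_value_Icc' (le_of_lt hpq) (hc.mono hsub) h0
  have hyq : y < q := lt_of_le_of_ne hy.2 (by rintro rfl; rw [hfy] at hfq_lt; exact lt_irrefl _ hfq_lt)
  refine ⟨y, hsub hy, ?_, ?_⟩
  · rw [hfy]; exact hyq
  · rw [hfy]; linarith [hy.1, hfq_le]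

private lemma iter_contOn (a b : ℝ) (f : ℝ → ℝ)
    (hc : ContinuousOn f (Icc a b)) (hm : MapsTo f (Icc a b) (Icc a b)) :
    ∀ n, ContinuousOn (f^[n]) (Icc a b) := by
  intro n
  induction n with
  | zero => simpa using continuousOn_id
  | succ n ih =>
    rw [Function.iterate_succ']
    exact hc.comp ih (hm.iterate n)

theorem period_pow_two_implies_smaller_pow_two (a b : ℝ) (hab : a ≤ b) (f : ℝ → ℝ)
    (hc : ContinuousOn f (Set.Icc a b))
    (hmaps : Set.MapsTo f (Set.Icc a b) (Set.Icc a b))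
    (l : ℕ) (x : ℝ) (hx : x ∈ Set.Icc a b)
    (hper : f^[2 ^ l] x = x ∧ ∀ k, 0 < k → k < 2 ^ l → f^[k] x ≠ x)
    (i : ℕ) (hi : i < l) :
    ∃ y ∈ Set.Icc a b, f^[2 ^ i] y = y ∧ ∀ k, 0 < k → k < 2 ^ i → f^[k] y ≠ y := by
  rcases Nat.eq_zero_or_pos i with rfl | hipos
  · -- fixed point
    obtain ⟨w, hw, hwfix⟩ := fix_of_ivt f a b hab hc
      (hmaps (left_mem_Icc.2 hab)).1 (hmaps (right_mem_Icc.2 hab)).2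
    refine ⟨w, hw, by simpa using hwfix, ?_⟩
    intro k hk hk'
    simp at hk'
    omega
  · obtain ⟨j, rfl⟩ : ∃ j, i = j + 1 := ⟨i - 1, (Nat.succ_pred_eq_of_pos hipos).symm⟩
    have hjl : j < l := lt_trans (Nat.lt_succ_self j) hi
    set g := f^[2^j] with hg_def
    have hgc : ContinuousOn g (Icc a b) := iter_contOn a b f hc hmaps _
    have hgm : MapsTo g (Icc a b) (Icc a b) := hmaps.iterate _
    -- x is periodic for g with g x ≠ x
    have hgn : g^[2^(l-j)] x = x := by
      rw [hg_def, ← Function.iterate_mul, ← pow_add]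
      rw [show j + (l - j) = l from Nat.add_sub_cancel' (le_of_lt hjl)]
      exact hper.1
    have hgx : g x ≠ x := by
      apply hper.2
      · exact Nat.pow_pos (by norm_num)
      · exact Nat.pow_lt_pow_right (by norm_num) hjl
    obtain ⟨y, hy, hy1, hy2⟩ := lemD a b g hgc hgm (2^(l-j))
      (Nat.pow_pos (by norm_num)) x hx hgn hgx
    obtain ⟨w, hw, hw2, hw1⟩ := lemC a b g hgc hgm y hy hy1 hy2
    refine ⟨w, hw, ?_, ?_⟩
    · -- f^[2^(j+1)] w = w
      have : g (g w) = f^[2^j + 2^j] w := by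
        rw [Function.iterate_add_apply]
      rw [this] at hw2
      rw [show 2^(j+1) = 2^j + 2^j from by ring]
      exact hw2
    · intro k hk hk' hkw
      have hper2 : Function.IsPeriodicPt f (2^(j+1)) w := by
        show f^[2^(j+1)] w = w
        have : g (g w) = f^[2^j + 2^j] w := by rw [Function.iterate_add_apply]
        rw [this] at hw2
        rw [show 2^(j+1) = 2^j + 2^j from by ring]
        exact hw2
      have hperk : Function.IsPeriodicPt f k w := hkw
      have hd1 : Function.minimalPeriod f w ∣ k := hperk.minimalPeriod_dvd
      have hd2 : Function.minimalPeriod f w ∣ 2^(j+1) := hper2.minimalPeriod_dvd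
      have hdk : Function.minimalPeriod f w ≤ k := Nat.le_of_dvd hk hd1
      have hdlt : Function.minimalPeriod f w < 2^(j+1) := lt_of_le_of_lt hdk hk'
      obtain ⟨m, hm', hdm⟩ := (Nat.dvd_prime_pow Nat.prime_two).1 hd2
      have hmj : m ≤ j := by
        by_contra hcon
        push_neg at hcon
        have heq : m = j + 1 := le_antisymm hm' hcon
        rw [hdm, heq] at hdlt
        exact lt_irrefl _ hdlt
      have : Function.IsPeriodicPt f (2^j) w := by
        rw [Function.isPeriodicPt_iff_minimalPeriod_dvd, hdm]
        exact pow_dvd_pow 2 hmj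
      exact hw1 this
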